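/- Let μ be a probability measure on ℝ with M := ∫_ℝ ω² dμ(ω) < ∞, let h : ℝ^D → ℝ be continuously differentiable, and define k : ℝ^D × ℝ^D → ℝ by k(y1, y2) = ∫_ℝ cos(ω·(h(y1) − h(y2))) dμ(ω). Then for every x ∈ ℝ^D and every i ∈ {1, …, D}, the mixed second partial derivative ∂²k/∂y_{1i}∂y_{2i} exists at (y1, y2) = (x, x) and equals M·(∂h(x)/∂x_i)²; consequently, ∑_{i=1}^D ∂²k(y1, y2)/∂y_{1i}∂y_{2i} |_{(y1,y2)=(x,x)} = M·‖∇h(x)‖². -/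

import Mathlib

open MeasureTheory Real Finset

/-- Computation from the proof of the paper's Proposition 1 (one-dimensional
discriminator output): for the composed random-feature kernel
`k(y₁,y₂) = ∫ cos(ω(h(y₁) − h(y₂))) dμ(ω)` with `M = ∫ ω² dμ(ω) < ∞` and `h`
continuously differentiable, the mixed second partials on the diagonal satisfy
`∂²k/∂y₁ᵢ∂y₂ᵢ(x,x) = M (∂h/∂xᵢ)²`, and their sum equals `M‖∇h(x)‖²`. -/

lemma aux_phi_deriv {μ : Measure ℝ} [IsProbabilityMeasure μ]
    (hμ : Integrable (fun ω => ω ^ 2) μ) (t : ℝ) :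
    HasDerivAt (fun t => ∫ ω, Real.cos (ω * t) ∂μ)
      (∫ ω, -(ω * Real.sin (ω * t)) ∂μ) t := by
  have H := hasDerivAt_integral_of_dominated_loc_of_deriv_le (μ := μ)
    (F := fun t ω => Real.cos (ω * t)) (F' := fun t ω => -(ω * Real.sin (ω * t)))
    (x₀ := t) (bound := fun ω => 1 + ω ^ 2) (s := Metric.ball t 1) (Metric.ball_mem_nhds t one_pos)
    (Filter.Eventually.of_forall fun s =>
      (Continuous.aestronglyMeasurable (by continuity)))
    ((integrable_const (1:ℝ)).mono'
      (Continuous.aestronglyMeasurable (by continuity))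
      (Filter.Eventually.of_forall fun ω => by
        simp [Real.abs_cos_le_one, abs_cos_le_one]))
    (Continuous.aestronglyMeasurable (by continuity))
    (Filter.Eventually.of_forall fun ω s _ => by
      have h1 : |Real.sin (ω * s)| ≤ 1 := abs_sin_le_one _
      have : ‖-(ω * Real.sin (ω * s))‖ = |ω| * |Real.sin (ω * s)| := by
        rw [norm_neg]; simp [abs_mul]
      rw [this]
      show |ω| * |Real.sin (ω * s)| ≤ 1 + ω ^ 2
      nlinarith [abs_nonneg ω, sq_abs ω])
    ((integrable_const (1:ℝ)).add hμ)
    (Filter.Eventually.of_forall fun ω s _ => by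
      have h1 : HasDerivAt (fun s : ℝ => ω * s) ω s := by simpa using (hasDerivAt_id s).const_mul ω
      have h2 := (Real.hasDerivAt_cos (ω * s)).comp s h1
      exact h2.congr_deriv (by ring))
  exact H.2

lemma aux_phi'_deriv {μ : Measure ℝ} [IsProbabilityMeasure μ]
    (hμ : Integrable (fun ω => ω ^ 2) μ) (t : ℝ) :
    HasDerivAt (fun t => ∫ ω, -(ω * Real.sin (ω * t)) ∂μ)
      (∫ ω, -(ω ^ 2 * Real.cos (ω * t)) ∂μ) t := by
  have H := hasDerivAt_integral_of_dominated_loc_of_deriv_le (μ := μ)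
    (F := fun t ω => -(ω * Real.sin (ω * t))) (F' := fun t ω => -(ω ^ 2 * Real.cos (ω * t)))
    (x₀ := t) (bound := fun ω => ω ^ 2) (s := Metric.ball t 1) (Metric.ball_mem_nhds t one_pos)
    (Filter.Eventually.of_forall fun s =>
      (Continuous.aestronglyMeasurable (by continuity)))
    (((integrable_const (1:ℝ)).add hμ).mono'
      (Continuous.aestronglyMeasurable (by continuity))
      (Filter.Eventually.of_forall fun ω => by
        have h1 : |Real.sin (ω * t)| ≤ 1 := abs_sin_le_one _
        have : ‖-(ω * Real.sin (ω * t))‖ = |ω| * |Real.sin (ω * t)| := by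
          rw [norm_neg]; simp [abs_mul]
        rw [this]
        show |ω| * |Real.sin (ω * t)| ≤ 1 + ω ^ 2
        nlinarith [abs_nonneg ω, sq_abs ω]))
    (Continuous.aestronglyMeasurable (by continuity))
    (Filter.Eventually.of_forall fun ω s _ => by
      have h1 : |Real.cos (ω * s)| ≤ 1 := abs_cos_le_one _
      have : ‖-(ω ^ 2 * Real.cos (ω * s))‖ = ω ^ 2 * |Real.cos (ω * s)| := by
        rw [norm_neg]; simp [abs_mul, abs_of_nonneg (sq_nonneg ω), sq_abs]
      rw [this]
      show ω ^ 2 * |Real.cos (ω * s)| ≤ ω ^ 2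
      nlinarith [sq_nonneg ω])
    hμ
    (Filter.Eventually.of_forall fun ω s _ => by
      have h1 : HasDerivAt (fun s : ℝ => ω * s) ω s := by simpa using (hasDerivAt_id s).const_mul ω
      have h2 := ((Real.hasDerivAt_sin (ω * s)).comp s h1).const_mul ω
      have h3 := h2.neg
      exact h3.congr_deriv (by ring))
  exact H.2

theorem stmt_16 {D : ℕ} (μ : Measure ℝ) [IsProbabilityMeasure μ]
    (hμ : Integrable (fun ω => ω ^ 2) μ)
    (M : ℝ) (hM : M = ∫ ω, ω ^ 2 ∂μ)
    (h : EuclideanSpace ℝ (Fin D) → ℝ) (hh : ContDiff ℝ 1 h)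
    (k : EuclideanSpace ℝ (Fin D) → EuclideanSpace ℝ (Fin D) → ℝ)
    (hk : ∀ y1 y2, k y1 y2 = ∫ ω, Real.cos (ω * (h y1 - h y2)) ∂μ)
    (x : EuclideanSpace ℝ (Fin D)) :
    (∀ i : Fin D, DifferentiableAt ℝ
        (fun y1 => fderiv ℝ (fun y2 => k y1 y2) x (EuclideanSpace.single i (1 : ℝ))) x) ∧
    (∀ i : Fin D,
      fderiv ℝ (fun y1 => fderiv ℝ (fun y2 => k y1 y2) x (EuclideanSpace.single i (1 : ℝ)))
          x (EuclideanSpace.single i (1 : ℝ))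
        = M * (fderiv ℝ h x (EuclideanSpace.single i (1 : ℝ))) ^ 2) ∧
    (∑ i : Fin D,
      fderiv ℝ (fun y1 => fderiv ℝ (fun y2 => k y1 y2) x (EuclideanSpace.single i (1 : ℝ)))
          x (EuclideanSpace.single i (1 : ℝ)))
      = M * ‖gradient h x‖ ^ 2 := by
  set φ' : ℝ → ℝ := fun t => ∫ ω, -(ω * Real.sin (ω * t)) ∂μ with hφ'def
  have hdh : Differentiable ℝ h := hh.differentiable one_ne_zero
  -- derivative of φ' at 0 is -M
  have hphi'0 : HasDerivAt φ' (-M) 0 := by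
    have := aux_phi'_deriv hμ 0
    convert this using 1
    rw [hM, ← integral_neg]
    congr 1; funext ω; simp
  -- Step 1: inner fderiv formula
  have key1 : ∀ y1, fderiv ℝ (fun y2 => k y1 y2) x
      = φ' (h y1 - h x) • -(fderiv ℝ h x) := by
    intro y1
    have h1 : HasFDerivAt (fun y2 => h y1 - h y2) (-(fderiv ℝ h x)) x :=
      (hdh x).hasFDerivAt.const_sub (h y1)
    have h2 := (aux_phi_deriv hμ (h y1 - h x)).comp_hasFDerivAt x h1
    have heq : (fun y2 => k y1 y2)
        = (fun t => ∫ ω, Real.cos (ω * t) ∂μ) ∘ (fun y2 => h y1 - h y2) := by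
      funext y2; simp [hk, Function.comp]
    rw [heq, h2.fderiv]
  -- the applied first-derivative function
  have key2 : ∀ i : Fin D, (fun y1 => fderiv ℝ (fun y2 => k y1 y2) x
        (EuclideanSpace.single i (1 : ℝ)))
      = fun y1 => -(φ' (h y1 - h x) * fderiv ℝ h x (EuclideanSpace.single i (1 : ℝ))) := by
    intro i; funext y1
    rw [key1 y1]
    simp [smul_eq_mul]
  -- second derivative
  have key3 : ∀ i : Fin D, HasFDerivAt
      (fun y1 => -(φ' (h y1 - h x) * fderiv ℝ h x (EuclideanSpace.single i (1 : ℝ))))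
      ((M * fderiv ℝ h x (EuclideanSpace.single i (1 : ℝ))) • fderiv ℝ h x) x := by
    intro i
    set c := fderiv ℝ h x (EuclideanSpace.single i (1 : ℝ))
    have h1 : HasFDerivAt (fun y1 => h y1 - h x) (fderiv ℝ h x) x :=
      ((hdh x).hasFDerivAt).sub_const (h x)
    have houter : HasDerivAt (fun t => -(φ' t * c)) (M * c) 0 := by
      have := (hphi'0.mul_const c).neg
      exact this.congr_deriv (by ring)
    have h0 : h x - h x = 0 := sub_self _
    have houter' : HasDerivAt (fun t => -(φ' t * c)) (M * c) (h x - h x) := by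
      rw [sub_self]; exact houter
    have h2 := houter'.comp_hasFDerivAt x h1
    exact h2
  have hdiff : ∀ i : Fin D, DifferentiableAt ℝ
      (fun y1 => fderiv ℝ (fun y2 => k y1 y2) x (EuclideanSpace.single i (1 : ℝ))) x := by
    intro i; rw [key2 i]; exact (key3 i).differentiableAt
  have hval : ∀ i : Fin D,
      fderiv ℝ (fun y1 => fderiv ℝ (fun y2 => k y1 y2) x (EuclideanSpace.single i (1 : ℝ)))
          x (EuclideanSpace.single i (1 : ℝ))
        = M * (fderiv ℝ h x (EuclideanSpace.single i (1 : ℝ))) ^ 2 := by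
    intro i
    rw [key2 i, (key3 i).fderiv]
    simp [smul_eq_mul]
    ring
  refine ⟨hdiff, hval, ?_⟩
  have hgrad : ∀ i : Fin D, gradient h x i
      = fderiv ℝ h x (EuclideanSpace.single i (1 : ℝ)) := by
    intro i
    have h1 : (inner ℝ (gradient h x) (EuclideanSpace.single i (1 : ℝ)) : ℝ)
        = fderiv ℝ h x (EuclideanSpace.single i (1 : ℝ)) :=
      InnerProductSpace.toDual_symm_apply
    rw [EuclideanSpace.inner_single_right] at h1
    simpa using h1
  calc (∑ i : Fin D,
      fderiv ℝ (fun y1 => fderiv ℝ (fun y2 => k y1 y2) x (EuclideanSpace.single i (1 : ℝ)))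
          x (EuclideanSpace.single i (1 : ℝ)))
      = ∑ i : Fin D, M * (gradient h x i) ^ 2 := by
        refine Finset.sum_congr rfl fun i _ => ?_
        rw [hval i, hgrad i]
    _ = M * ∑ i : Fin D, (gradient h x i) ^ 2 := by rw [Finset.mul_sum]
    _ = M * ‖gradient h x‖ ^ 2 := by
        congr 1
        rw [EuclideanSpace.norm_eq, Real.sq_sqrt (by positivity)]
        simp [sq_abs]
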